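/- Let p be an odd prime, R = F_p[u]/(u^2), and θ a nontrivial automorphism of R. The group of units of the skew polynomial ring R[x;θ] is exactly { a + u·h(x) : a ∈ F_p*, h(x) ∈ F_p[x] }. -/

import Mathlib

open TrivSqZeroExt

theorem RingAut.one_apply' {R : Type*} [Ring R] (b : R) : (1 : RingAut R) b = b := rfl

/-- The skew polynomial ring `R[x;θ]`, as finitely supported coefficient
sequences with multiplication twisted by the ring automorphism `θ`:
`(a x^i) * (b x^j) = a θ^i(b) x^{i+j}`. -/
def SkewPoly (R : Type*) [Ring R] (θ : RingAut R) : Type _ := ℕ →₀ R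

namespace SkewPoly

variable {R : Type*} [Ring R] (θ : RingAut R)

/-- The skew-twisted convolution product. -/
noncomputable def mulAux (f g : ℕ →₀ R) : ℕ →₀ R :=
  f.sum fun i a => g.sum fun j b => Finsupp.single (i + j) (a * (θ ^ i) b)

theorem mulAux_zero_left (g : ℕ →₀ R) : mulAux θ 0 g = 0 := Finsupp.sum_zero_index

theorem mulAux_zero_right (f : ℕ →₀ R) : mulAux θ f 0 = 0 := by
  simp [mulAux, Finsupp.sum_zero_index]

theorem mulAux_add_left (f f' g : ℕ →₀ R) :
    mulAux θ (f + f') g = mulAux θ f g + mulAux θ f' g := by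
  unfold mulAux
  apply Finsupp.sum_add_index' <;> intros <;> simp [add_mul, Finsupp.single_add, Finsupp.sum_add]

theorem mulAux_add_right (f g g' : ℕ →₀ R) :
    mulAux θ f (g + g') = mulAux θ f g + mulAux θ f g' := by
  unfold mulAux
  rw [← Finsupp.sum_add]
  apply Finsupp.sum_congr
  intro i _
  apply Finsupp.sum_add_index' <;> intros <;> simp [mul_add, Finsupp.single_add]

theorem one_mulAux (g : ℕ →₀ R) : mulAux θ (Finsupp.single 0 1) g = g := by
  unfold mulAux
  rw [Finsupp.sum_single_index]
  · simp [RingAut.one_apply', Finsupp.sum_single]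
  · simp

theorem mulAux_one (f : ℕ →₀ R) : mulAux θ f (Finsupp.single 0 1) = f := by
  unfold mulAux
  have : ∀ i ∈ f.support, ((Finsupp.single 0 1 : ℕ →₀ R).sum fun j b =>
      Finsupp.single (i + j) (f i * (θ ^ i) b)) = Finsupp.single i (f i) := by
    intro i _
    rw [Finsupp.sum_single_index] <;> simp
  rw [Finsupp.sum_congr this, Finsupp.sum_single f]

theorem mulAux_single_single (i j : ℕ) (a b : R) :
    mulAux θ (Finsupp.single i a) (Finsupp.single j b) =
      Finsupp.single (i + j) (a * (θ ^ i) b) := by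
  unfold mulAux
  rw [Finsupp.sum_single_index, Finsupp.sum_single_index]
  · simp
  · rw [Finsupp.sum_single_index] <;> simp

theorem mulAux_assoc (f g h : ℕ →₀ R) :
    mulAux θ (mulAux θ f g) h = mulAux θ f (mulAux θ g h) := by
  induction f using Finsupp.induction_linear with
  | zero => simp [mulAux_zero_left]
  | add f f' hf hf' => simp [mulAux_add_left, hf, hf']
  | single i a =>
    induction g using Finsupp.induction_linear with
    | zero => simp [mulAux_zero_left, mulAux_zero_right]
    | add g g' hg hg' => simp [mulAux_add_left, mulAux_add_right, hg, hg']
    | single j b =>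
      induction h using Finsupp.induction_linear with
      | zero => simp [mulAux_zero_right]
      | add h h' hh hh' => simp [mulAux_add_right, hh, hh']
      | single k c =>
        rw [mulAux_single_single, mulAux_single_single, mulAux_single_single,
          mulAux_single_single]
        rw [add_assoc, mul_assoc, map_mul, pow_add]
        rfl

variable {θ}

noncomputable instance : AddCommGroup (SkewPoly R θ) := inferInstanceAs (AddCommGroup (ℕ →₀ R))

/-- Reinterpret a skew polynomial as a finitely supported function. -/
def toFinsupp (f : SkewPoly R θ) : ℕ →₀ R := f

/-- Build a skew polynomial out of a finitely supported function. -/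
def ofFinsupp (f : ℕ →₀ R) : SkewPoly R θ := f

noncomputable instance : Ring (SkewPoly R θ) where
  __ := (inferInstanceAs (AddCommGroup (ℕ →₀ R)) : AddCommGroup (ℕ →₀ R))
  mul f g := mulAux θ (toFinsupp f) (toFinsupp g)
  one := Finsupp.single 0 1
  left_distrib f g h := mulAux_add_right θ (toFinsupp f) (toFinsupp g) (toFinsupp h)
  right_distrib f g h := mulAux_add_left θ (toFinsupp f) (toFinsupp g) (toFinsupp h)
  zero_mul := mulAux_zero_left θ
  mul_zero := mulAux_zero_right θ
  mul_assoc := mulAux_assoc θ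
  one_mul := one_mulAux θ
  mul_one := mulAux_one θ

variable (θ) in
/-- The constant skew polynomial `a`. -/
noncomputable def C (a : R) : SkewPoly R θ := ofFinsupp (Finsupp.single 0 a)

variable (θ) in
/-- The variable `x` of the skew polynomial ring. -/
noncomputable def X : SkewPoly R θ := ofFinsupp (Finsupp.single 1 1)

/-- The `n`-th coefficient of a skew polynomial. -/
def coeff (f : SkewPoly R θ) (n : ℕ) : R := toFinsupp f n

/-- The degree of a skew polynomial (`⊥` for the zero polynomial). -/
def degree (f : SkewPoly R θ) : WithBot ℕ := (toFinsupp f).support.max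

/-- The degree of a skew polynomial as a natural number. -/
def natDegree (f : SkewPoly R θ) : ℕ := WithBot.unbotD 0 (degree f)

/-- The leading coefficient of a skew polynomial. -/
def leadingCoeff (f : SkewPoly R θ) : R := coeff f (natDegree f)

/-- A skew polynomial is monic if its leading coefficient is `1`. -/
def Monic (f : SkewPoly R θ) : Prop := leadingCoeff f = 1

end SkewPoly

/-- The inclusion of `F_p[x]` into the skew polynomial ring
`(F_p + u F_p)[x;θ]` (coefficientwise `a ↦ a + u·0`); this is the natural
embedding of `F_p[x]` as a subring of `R[x;θ]` since `θ` fixes `F_p`. -/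
noncomputable def SkewPoly.ofPoly {p : ℕ}
    (θ : RingAut (DualNumber (ZMod p))) (f : Polynomial (ZMod p)) :
    SkewPoly (DualNumber (ZMod p)) θ :=
  SkewPoly.ofFinsupp
    (Finsupp.mapRange (inl : ZMod p → DualNumber (ZMod p)) (inl_zero (ZMod p)) f.toFinsupp.coeff)

/-- Reduction of a skew polynomial over `F_p + u F_p` modulo `u`, i.e. the
polynomial in `F_p[x]` whose coefficients are the first components of the
coefficients. -/
noncomputable def SkewPoly.fstPoly {p : ℕ}
    {θ : RingAut (DualNumber (ZMod p))} (f : SkewPoly (DualNumber (ZMod p)) θ) :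
    Polynomial (ZMod p) :=
  Polynomial.ofFinsupp (AddMonoidAlgebra.ofCoeff
    (Finsupp.mapRange TrivSqZeroExt.fst fst_zero (SkewPoly.toFinsupp f)))


section Aux

open TrivSqZeroExt

namespace SkewPoly

variable {R : Type*} [Ring R] {θ : RingAut R}

theorem toFinsupp_injective' :
    Function.Injective (toFinsupp : SkewPoly R θ → ℕ →₀ R) := fun _ _ h => h

theorem toFinsupp_add' (f g : SkewPoly R θ) :
    toFinsupp (f + g) = toFinsupp f + toFinsupp g := rfl

theorem mul_def' (f g : SkewPoly R θ) :
    toFinsupp (f * g) = mulAux θ (toFinsupp f) (toFinsupp g) := rfl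

theorem C_mul_C (r s : R) : C θ r * C θ s = C θ (r * s) := by
  apply toFinsupp_injective'
  rw [mul_def']
  show mulAux θ (Finsupp.single 0 r) (Finsupp.single 0 s) = Finsupp.single 0 (r * s)
  rw [mulAux_single_single, pow_zero, RingAut.one_apply', Nat.add_zero]

theorem C_one : C θ (1 : R) = 1 := rfl

theorem C_central (t : R) (ht : ∀ i : ℕ, (θ ^ i) t = t) (htc : ∀ r : R, r * t = t * r)
    (f : SkewPoly R θ) : f * C θ t = C θ t * f := by
  apply toFinsupp_injective'
  rw [mul_def', mul_def']
  show mulAux θ (toFinsupp f) (Finsupp.single 0 t) =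
    mulAux θ (Finsupp.single 0 t) (toFinsupp f)
  induction toFinsupp f using Finsupp.induction_linear with
  | zero => rw [mulAux_zero_left, mulAux_zero_right]
  | add f g hf hg => rw [mulAux_add_left, mulAux_add_right, hf, hg]
  | single i a =>
    rw [mulAux_single_single, mulAux_single_single, ht, pow_zero, RingAut.one_apply', htc,
      Nat.add_zero, Nat.zero_add]

theorem mul_eq_zero' {f g : SkewPoly R θ}
    (H : ∀ i j : ℕ, toFinsupp f i * (θ ^ i) (toFinsupp g j) = 0) : f * g = 0 := by
  apply toFinsupp_injective'
  rw [mul_def']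
  unfold mulAux
  rw [Finsupp.sum]
  apply Finset.sum_eq_zero
  intro i _
  rw [Finsupp.sum]
  apply Finset.sum_eq_zero
  intro j _
  rw [H i j, Finsupp.single_zero]

theorem single_zero_mulAux (r : R) (F : ℕ →₀ R) :
    mulAux θ (Finsupp.single 0 r) F = F.sum fun j b => Finsupp.single j (r * b) := by
  unfold mulAux
  rw [Finsupp.sum_single_index]
  · apply Finsupp.sum_congr
    intro j _
    rw [Nat.zero_add, pow_zero, RingAut.one_apply']
  · simp

theorem sum_single_mul_apply (r : R) (F : ℕ →₀ R) (n : ℕ) :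
    (F.sum fun j b => Finsupp.single j (r * b)) n = r * F n := by
  classical
  rw [Finsupp.sum_apply, Finsupp.sum,
    Finset.sum_eq_single n (fun j _ hj => Finsupp.single_eq_of_ne' hj)
      (fun hn => by
        rw [Finsupp.notMem_support_iff.mp hn, mul_zero, Finsupp.single_zero]; rfl),
    Finsupp.single_eq_same]

end SkewPoly

section DN

open SkewPoly

variable {p : ℕ} [Fact p.Prime] {θ : RingAut (DualNumber (ZMod p))}

theorem theta_inl (a : ZMod p) : θ (inl a) = inl a := by
  haveI : NeZero p := ⟨(Fact.out : p.Prime).ne_zero⟩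
  have h : ((a.val : ℕ) : ZMod p) = a := ZMod.natCast_rightInverse a
  rw [← h, inl_natCast, map_natCast]

theorem eps_mul_inl' (b : ZMod p) : (DualNumber.eps : DualNumber (ZMod p)) * inl b = inr b := by
  rw [mul_comm, show (DualNumber.eps : DualNumber (ZMod p)) = inr 1 from rfl,
    inl_mul_inr, smul_eq_mul, mul_one]

theorem theta_fst (r : DualNumber (ZMod p)) : fst (θ r) = fst r := by
  have heps : fst (θ DualNumber.eps) = 0 := by
    have h0 : θ DualNumber.eps * θ DualNumber.eps = 0 := by
      rw [← map_mul, DualNumber.eps_mul_eps, map_zero]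
    have := congrArg fst h0
    rw [fst_mul, fst_zero] at this
    exact mul_self_eq_zero.mp this
  have hdec : r = inl (fst r) + inr (snd r) := (inl_fst_add_inr_snd_eq r).symm
  have hinr : (inr (snd r) : DualNumber (ZMod p)) = DualNumber.eps * inl (snd r) :=
    (eps_mul_inl' _).symm
  conv_lhs => rw [hdec, hinr]
  rw [map_add, map_mul, theta_inl, fst_add, fst_inl, fst_mul, heps, zero_mul, add_zero]

theorem theta_pow_fst (i : ℕ) : ∀ r : DualNumber (ZMod p), fst ((θ ^ i) r) = fst r := by
  induction i with
  | zero => intro r; rw [pow_zero, RingAut.one_apply']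
  | succ n ih =>
    intro r
    rw [pow_succ]
    show fst ((θ ^ n) (θ r)) = fst r
    rw [ih (θ r), theta_fst]

theorem theta_pow_inl (i : ℕ) (a : ZMod p) : (θ ^ i) (inl a) = inl a := by
  induction i with
  | zero => rw [pow_zero, RingAut.one_apply']
  | succ n ih =>
    rw [pow_succ]
    show (θ ^ n) (θ (inl a)) = inl a
    rw [theta_inl, ih]

theorem fst_zero_mul {x y : DualNumber (ZMod p)} (hx : fst x = 0) (hy : fst y = 0) :
    x * y = 0 := by
  have hx' : x = inr (snd x) := by
    conv_lhs => rw [← inl_fst_add_inr_snd_eq x]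
    rw [hx, inl_zero, zero_add]
  have hy' : y = inr (snd y) := by
    conv_lhs => rw [← inl_fst_add_inr_snd_eq y]
    rw [hy, inl_zero, zero_add]
  rw [hx', hy', inr_mul_inr]

/-- auxiliary: image of `mulAux` under coefficientwise `fst`. -/
theorem fstPoly_mulAux (f g : ℕ →₀ DualNumber (ZMod p)) :
    SkewPoly.fstPoly (θ := θ) (SkewPoly.ofFinsupp (SkewPoly.mulAux θ f g)) =
      SkewPoly.fstPoly (θ := θ) (SkewPoly.ofFinsupp f) *
        SkewPoly.fstPoly (θ := θ) (SkewPoly.ofFinsupp g) := by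
  have hP0 : SkewPoly.fstPoly (θ := θ) (SkewPoly.ofFinsupp 0) = 0 := by
    unfold SkewPoly.fstPoly
    rw [show SkewPoly.toFinsupp (SkewPoly.ofFinsupp (θ := θ) 0) = 0 from rfl,
      Finsupp.mapRange_zero, AddMonoidAlgebra.ofCoeff_zero, Polynomial.ofFinsupp_zero]
  have hPadd : ∀ F G : ℕ →₀ DualNumber (ZMod p),
      SkewPoly.fstPoly (θ := θ) (SkewPoly.ofFinsupp (F + G)) =
        SkewPoly.fstPoly (θ := θ) (SkewPoly.ofFinsupp F) +
          SkewPoly.fstPoly (θ := θ) (SkewPoly.ofFinsupp G) := by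
    intro F G
    unfold SkewPoly.fstPoly
    rw [show SkewPoly.toFinsupp (SkewPoly.ofFinsupp (θ := θ) (F + G)) = F + G from rfl,
      Finsupp.mapRange_add fst_add, AddMonoidAlgebra.ofCoeff_add, Polynomial.ofFinsupp_add]
    rfl
  have hPsingle : ∀ (i : ℕ) (a : DualNumber (ZMod p)),
      SkewPoly.fstPoly (θ := θ) (SkewPoly.ofFinsupp (Finsupp.single i a)) =
        Polynomial.monomial i (fst a) := by
    intro i a
    unfold SkewPoly.fstPoly
    rw [show SkewPoly.toFinsupp (SkewPoly.ofFinsupp (θ := θ) (Finsupp.single i a)) =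
      Finsupp.single i a from rfl, Finsupp.mapRange_single, AddMonoidAlgebra.ofCoeff_single,
      Polynomial.ofFinsupp_single]
  induction f using Finsupp.induction_linear with
  | zero => rw [SkewPoly.mulAux_zero_left, hP0, zero_mul]
  | add f f' hf hf' => rw [SkewPoly.mulAux_add_left, hPadd, hf, hf', hPadd, add_mul]
  | single i a =>
    induction g using Finsupp.induction_linear with
    | zero => rw [SkewPoly.mulAux_zero_right, hP0, mul_zero]
    | add g g' hg hg' => rw [SkewPoly.mulAux_add_right, hPadd, hg, hg', hPadd, mul_add]
    | single j b =>
      rw [SkewPoly.mulAux_single_single, hPsingle, hPsingle, hPsingle,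
        Polynomial.monomial_mul_monomial, fst_mul, theta_pow_fst]

/-- `fstPoly` as a ring hom. -/
noncomputable def fstHom (θ : RingAut (DualNumber (ZMod p))) :
    SkewPoly (DualNumber (ZMod p)) θ →+* Polynomial (ZMod p) where
  toFun := SkewPoly.fstPoly
  map_zero' := by
    show SkewPoly.fstPoly (0 : SkewPoly (DualNumber (ZMod p)) θ) = 0
    unfold SkewPoly.fstPoly
    rw [show SkewPoly.toFinsupp (0 : SkewPoly (DualNumber (ZMod p)) θ) = 0 from rfl,
      Finsupp.mapRange_zero, AddMonoidAlgebra.ofCoeff_zero, Polynomial.ofFinsupp_zero]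
  map_add' f g := by
    show SkewPoly.fstPoly (f + g) = SkewPoly.fstPoly f + SkewPoly.fstPoly g
    unfold SkewPoly.fstPoly
    rw [SkewPoly.toFinsupp_add', Finsupp.mapRange_add fst_add, AddMonoidAlgebra.ofCoeff_add, Polynomial.ofFinsupp_add]
  map_one' := by
    unfold SkewPoly.fstPoly
    rw [show SkewPoly.toFinsupp (1 : SkewPoly (DualNumber (ZMod p)) θ) =
      Finsupp.single 0 1 from rfl, Finsupp.mapRange_single, fst_one,
      AddMonoidAlgebra.ofCoeff_single, Polynomial.ofFinsupp_single, Polynomial.monomial_zero_one]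
  map_mul' f g := fstPoly_mulAux (SkewPoly.toFinsupp f) (SkewPoly.toFinsupp g)

theorem coeff_eps_mul (h : Polynomial (ZMod p)) (n : ℕ) :
    SkewPoly.toFinsupp (SkewPoly.C θ DualNumber.eps * SkewPoly.ofPoly θ h) n =
      inr (h.coeff n) := by
  rw [SkewPoly.mul_def']
  show (SkewPoly.mulAux θ (Finsupp.single 0 DualNumber.eps)
      (Finsupp.mapRange inl (inl_zero _) h.toFinsupp.coeff)) n = _
  rw [SkewPoly.single_zero_mulAux, SkewPoly.sum_single_mul_apply, Finsupp.mapRange_apply,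
    show h.toFinsupp.coeff n = h.coeff n from rfl, eps_mul_inl']

end DN

end Aux

open SkewPoly DualNumber in
/-- For a nontrivial automorphism `θ` of `R = F_p[u]/(u²)`, the units of
`R[x;θ]` are exactly the elements `a + u·h(x)` with `a ∈ F_p*` and
`h(x) ∈ F_p[x]`. -/
theorem skew_units (p : ℕ) (hp : p.Prime) (hodd : p ≠ 2)
    (θ : RingAut (DualNumber (ZMod p))) (hθ : θ ≠ 1)
    (f : SkewPoly (DualNumber (ZMod p)) θ) :
    IsUnit f ↔
      ∃ a : ZMod p, a ≠ 0 ∧ ∃ h : Polynomial (ZMod p),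
        f = SkewPoly.C θ (TrivSqZeroExt.inl a) + SkewPoly.C θ ε * SkewPoly.ofPoly θ h := by
  haveI : Fact p.Prime := ⟨hp⟩
  constructor
  · intro hf
    have hu : IsUnit (SkewPoly.fstPoly f) := hf.map (fstHom θ)
    obtain ⟨a, ha, hC⟩ := Polynomial.isUnit_iff.mp hu
    refine ⟨a, ha.ne_zero,
      ⟨AddMonoidAlgebra.ofCoeff (Finsupp.mapRange TrivSqZeroExt.snd snd_zero (SkewPoly.toFinsupp f))⟩, ?_⟩
    apply SkewPoly.toFinsupp_injective'
    apply Finsupp.ext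
    intro n
    rw [SkewPoly.toFinsupp_add', Finsupp.add_apply, coeff_eps_mul,
      Polynomial.coeff_ofFinsupp, AddMonoidAlgebra.coeff_ofCoeff, Finsupp.mapRange_apply]
    have hfst : fst (SkewPoly.toFinsupp f n) = (Polynomial.C a).coeff n := by
      rw [hC]
      show _ = (SkewPoly.fstPoly f).coeff n
      unfold SkewPoly.fstPoly
      rw [Polynomial.coeff_ofFinsupp, AddMonoidAlgebra.coeff_ofCoeff, Finsupp.mapRange_apply]
    rw [show SkewPoly.toFinsupp (SkewPoly.C θ (TrivSqZeroExt.inl a)) =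
      Finsupp.single 0 (TrivSqZeroExt.inl a) from rfl]
    conv_lhs => rw [← inl_fst_add_inr_snd_eq (SkewPoly.toFinsupp f n)]
    congr 1
    rw [hfst, Polynomial.coeff_C]
    rcases eq_or_ne n 0 with rfl | hn
    · rw [if_pos rfl, Finsupp.single_eq_same]
    · rw [if_neg hn, Finsupp.single_eq_of_ne' (Ne.symm hn), inl_zero]
  · rintro ⟨a, ha, h, rfl⟩
    rw [isUnit_iff_exists]
    set A := SkewPoly.C θ (TrivSqZeroExt.inl a) with hA
    set m := SkewPoly.C θ DualNumber.eps * SkewPoly.ofPoly θ h with hmdef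
    set b := SkewPoly.C θ (TrivSqZeroExt.inl a⁻¹) with hb
    have hcen : ∀ (c : ZMod p) (F : SkewPoly (DualNumber (ZMod p)) θ),
        F * SkewPoly.C θ (TrivSqZeroExt.inl c) = SkewPoly.C θ (TrivSqZeroExt.inl c) * F :=
      fun c F =>
        SkewPoly.C_central _ (fun i => theta_pow_inl i c) (fun r => mul_comm r (inl c)) F
    have hmm : m * m = 0 := by
      apply SkewPoly.mul_eq_zero'
      intro i j
      apply fst_zero_mul
      · rw [hmdef, coeff_eps_mul, fst_inr]
      · rw [theta_pow_fst, hmdef, coeff_eps_mul, fst_inr]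
    have e1 : A * b = 1 := by
      rw [hA, hb, SkewPoly.C_mul_C, inl_mul_inl, mul_inv_cancel₀ ha, inl_one, SkewPoly.C_one]
    have e1' : b * A = 1 := by
      rw [hA, hb, SkewPoly.C_mul_C, inl_mul_inl, inv_mul_cancel₀ ha, inl_one, SkewPoly.C_one]
    have hmb : m * b = b * m := hcen a⁻¹ m
    have hmA : m * A = A * m := hcen a m
    refine ⟨b - b * (b * m), ?_, ?_⟩
    · have e3 : A * (b * (b * m)) = b * m := by rw [← mul_assoc, e1, one_mul]
      have e2 : m * (b * (b * m)) = 0 := by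
        calc m * (b * (b * m)) = m * (b * b * m) := by rw [mul_assoc b b m]
        _ = m * (b * b) * m := by rw [← mul_assoc]
        _ = m * b * b * m := by rw [← mul_assoc m b b]
        _ = b * m * b * m := by rw [hmb]
        _ = b * (m * b) * m := by rw [mul_assoc b m b]
        _ = b * (b * m) * m := by rw [hmb]
        _ = b * b * m * m := by rw [← mul_assoc b b m]
        _ = b * b * (m * m) := by rw [mul_assoc]
        _ = 0 := by rw [hmm, mul_zero]
      rw [add_mul, mul_sub, mul_sub, e1, e3, e2, hmb]
      erw [sub_zero]
      abel
    · have e4 : b * (b * m) * A = b * m := by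
        rw [mul_assoc b (b * m) A, mul_assoc b m A, hmA, ← mul_assoc b A m, e1', one_mul]
      have e5 : b * (b * m) * m = 0 := by
        rw [mul_assoc b (b * m) m, mul_assoc b m m, hmm, mul_zero, mul_zero]
      rw [sub_mul, mul_add, mul_add, e1', e4, e5, add_zero]
      abel
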